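/- For every continuously differentiable matrix field A : ℝ³ → so(3) taking values in the skew-symmetric 3×3 matrices and all real numbers α₁, α₂, α₃, the following pointwise identity holds: α₁ dev sym Curl A + α₂ skew Curl A + α₃ tr(Curl A)·𝟙 = −α₁ dev sym(∇(axl A)) + α₂ skew(∇(axl A)) + 2α₃ tr(∇(axl A))·𝟙, where ∇(axl A) is the Jacobian matrix of the vector field axl A. -/

import Mathlib

open Matrix

/-- Partial derivative in direction `j` of a scalar field on `ℝ³`. -/
noncomputable def pd (j : Fin 3) (f : (Fin 3 → ℝ) → ℝ) (x : Fin 3 → ℝ) : ℝ :=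
  fderiv ℝ f x (Pi.single j 1)

/-- Gradient of a scalar field on `ℝ³`. -/
noncomputable def grad3 (f : (Fin 3 → ℝ) → ℝ) (x : Fin 3 → ℝ) : Fin 3 → ℝ :=
  fun i => pd i f x

/-- Classical curl of a vector field on `ℝ³`. -/
noncomputable def vcurl (v : (Fin 3 → ℝ) → Fin 3 → ℝ) (x : Fin 3 → ℝ) : Fin 3 → ℝ :=
  ![pd 1 (fun y => v y 2) x - pd 2 (fun y => v y 1) x,
    pd 2 (fun y => v y 0) x - pd 0 (fun y => v y 2) x,
    pd 0 (fun y => v y 1) x - pd 1 (fun y => v y 0) x]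

/-- Divergence of a vector field on `ℝ³`. -/
noncomputable def vdiv (v : (Fin 3 → ℝ) → Fin 3 → ℝ) (x : Fin 3 → ℝ) : ℝ :=
  ∑ i, pd i (fun y => v y i) x

/-- Row-wise Curl of a matrix field on `ℝ³`: the `i`-th row of `mCurl P`
is the curl of the `i`-th row of `P`. -/
noncomputable def mCurl (P : (Fin 3 → ℝ) → Matrix (Fin 3) (Fin 3) ℝ) (x : Fin 3 → ℝ) :
    Matrix (Fin 3) (Fin 3) ℝ :=
  Matrix.of fun i j => vcurl (fun y => P y i) x j

/-- Jacobian matrix of a vector field on `ℝ³`. -/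
noncomputable def jac (v : (Fin 3 → ℝ) → Fin 3 → ℝ) (x : Fin 3 → ℝ) :
    Matrix (Fin 3) (Fin 3) ℝ :=
  Matrix.of fun i j => pd j (fun y => v y i) x

/-- Axial vector of a (skew-symmetric) `3 × 3` matrix: with `A 1 2 = -a₁`,
`A 2 0 = -a₂`, `A 0 1 = -a₃` (so `A 2 1 = a₁`, `A 0 2 = a₂`, `A 1 0 = a₃`). -/
def axl (A : Matrix (Fin 3) (Fin 3) ℝ) : Fin 3 → ℝ :=
  ![A 2 1, A 0 2, A 1 0]

/-- The skew-symmetric matrix `anti a` characterized by `(anti a) ⬝ v = a × v`. -/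
def antiM (a : Fin 3 → ℝ) : Matrix (Fin 3) (Fin 3) ℝ :=
  !![0, -a 2, a 1; a 2, 0, -a 0; -a 1, a 0, 0]

/-- Symmetric part of a matrix. -/
noncomputable def symM (X : Matrix (Fin 3) (Fin 3) ℝ) : Matrix (Fin 3) (Fin 3) ℝ :=
  (1 / 2 : ℝ) • (X + Xᵀ)

/-- Skew-symmetric part of a matrix. -/
noncomputable def skewM (X : Matrix (Fin 3) (Fin 3) ℝ) : Matrix (Fin 3) (Fin 3) ℝ :=
  (1 / 2 : ℝ) • (X - Xᵀ)

/-- Deviatoric (trace-free) part of a matrix. -/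
noncomputable def devM (X : Matrix (Fin 3) (Fin 3) ℝ) : Matrix (Fin 3) (Fin 3) ℝ :=
  X - (Matrix.trace X / 3) • (1 : Matrix (Fin 3) (Fin 3) ℝ)

/-- Frobenius inner product `⟨X, Y⟩ = tr (X Yᵀ)`. -/
noncomputable def minner (X Y : Matrix (Fin 3) (Fin 3) ℝ) : ℝ :=
  Matrix.trace (X * Yᵀ)

/-- Squared Frobenius norm. -/
noncomputable def mnormSq (X : Matrix (Fin 3) (Fin 3) ℝ) : ℝ :=
  minner X X

/-- Squared Euclidean norm of a vector in `ℝ³`. -/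
def vnormSq (v : Fin 3 → ℝ) : ℝ :=
  ∑ i, (v i) ^ 2

lemma curl_alg_aux (J : Matrix (Fin 3) (Fin 3) ℝ) (α₁ α₂ α₃ : ℝ) :
    α₁ • devM (symM (Matrix.trace J • (1 : Matrix (Fin 3) (Fin 3) ℝ) - Jᵀ)) +
        α₂ • skewM (Matrix.trace J • (1 : Matrix (Fin 3) (Fin 3) ℝ) - Jᵀ) +
        (α₃ * Matrix.trace (Matrix.trace J • (1 : Matrix (Fin 3) (Fin 3) ℝ) - Jᵀ)) •
          (1 : Matrix (Fin 3) (Fin 3) ℝ) =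
      (-α₁) • devM (symM J) + α₂ • skewM J +
        (2 * α₃ * Matrix.trace J) • (1 : Matrix (Fin 3) (Fin 3) ℝ) := by
  ext i j
  fin_cases i <;> fin_cases j <;>
    simp [devM, symM, skewM, Matrix.trace, Fin.sum_univ_three, Matrix.one_apply,
      Matrix.transpose_apply, Matrix.add_apply, Matrix.sub_apply, Matrix.smul_apply,
      Matrix.diag] <;> ring

set_option maxHeartbeats 1600000 in
/-- For a skew-symmetric matrix field A:
α₁ dev sym Curl A + α₂ skew Curl A + α₃ tr(Curl A)·𝟙
= −α₁ dev sym ∇(axl A) + α₂ skew ∇(axl A) + 2α₃ tr(∇(axl A))·𝟙. -/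
theorem curl_skew_curvature_identity
    (A : (Fin 3 → ℝ) → Matrix (Fin 3) (Fin 3) ℝ)
    (hA_skew : ∀ x, (A x)ᵀ = -(A x))
    (hA_diff : ∀ i j, ContDiff ℝ 1 (fun y => A y i j))
    (α₁ α₂ α₃ : ℝ) :
    ∀ x : Fin 3 → ℝ,
      α₁ • devM (symM (mCurl A x)) + α₂ • skewM (mCurl A x) +
          (α₃ * Matrix.trace (mCurl A x)) • (1 : Matrix (Fin 3) (Fin 3) ℝ) =
        (-α₁) • devM (symM (jac (fun y => axl (A y)) x)) +
          α₂ • skewM (jac (fun y => axl (A y)) x) +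
          (2 * α₃ * Matrix.trace (jac (fun y => axl (A y)) x)) •
            (1 : Matrix (Fin 3) (Fin 3) ℝ) := by
  intro x
  have hsk : ∀ y (i j : Fin 3), A y j i = - A y i j := by
    intro y i j
    have := congrFun (congrFun (hA_skew y) i) j
    simpa using this
  have hdiag : ∀ y (i : Fin 3), A y i i = 0 := by
    intro y i
    have := hsk y i i
    linarith
  have pdskew : ∀ (j i k : Fin 3), pd j (fun y => A y i k) x = - pd j (fun y => A y k i) x := by
    intro j i k
    have h : (fun y => A y i k) = fun y => -(A y k i) := funext fun y => hsk y k i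
    rw [pd, h, fderiv_fun_neg]
    simp [pd]
  have pddiag : ∀ (j i : Fin 3), pd j (fun y => A y i i) x = 0 := by
    intro j i
    have h : (fun y => A y i i) = fun _ => (0 : ℝ) := funext fun y => hdiag y i
    rw [pd, h, fderiv_fun_const]
    simp
  have h12 : ∀ j, pd j (fun y => A y 1 2) x = - pd j (fun y => A y 2 1) x := fun j => pdskew j 1 2
  have h20 : ∀ j, pd j (fun y => A y 2 0) x = - pd j (fun y => A y 0 2) x := fun j => pdskew j 2 0
  have h01 : ∀ j, pd j (fun y => A y 0 1) x = - pd j (fun y => A y 1 0) x := fun j => pdskew j 0 1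
  have h00 : ∀ j, pd j (fun y => A y 0 0) x = 0 := fun j => pddiag j 0
  have h11 : ∀ j, pd j (fun y => A y 1 1) x = 0 := fun j => pddiag j 1
  have h22 : ∀ j, pd j (fun y => A y 2 2) x = 0 := fun j => pddiag j 2
  have key : mCurl A x =
      Matrix.trace (jac (fun y => axl (A y)) x) • (1 : Matrix (Fin 3) (Fin 3) ℝ) -
        (jac (fun y => axl (A y)) x)ᵀ := by
    ext i j
    fin_cases i <;> fin_cases j <;>
      simp [mCurl, vcurl, jac, axl, Matrix.trace, Fin.sum_univ_three, Matrix.one_apply,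
        h12, h20, h01, h00, h11, h22] <;> ring
  rw [key, curl_alg_aux]
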